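/- There is a constant c' such that for every positive integer k and every binary string x with k + ⌊log₂ k⌋ ≤ |x|, the sophistication of x at (integer) significance |x| − C(x) − ⌊log₂ k⌋ + c' is at most k + c', i.e. soph_{|x| − C(x) − ⌊log₂ k⌋ + c'}(x) ≤ k + c'. -/

import Mathlib

/-- Bijective binary encoding of binary strings as natural numbers. -/
def strToNat : List Bool → ℕ
  | [] => 0
  | b :: t => (if b then 2 else 1) + 2 * strToNat t

/-- The partial result of running machine `M` on program `p` and auxiliary input `d`. -/
def evalS (M : Nat.Partrec.Code) (p d : List Bool) : Part ℕ :=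
  M.eval (Nat.pair (strToNat p) (strToNat d))

/-- `M(p, d) = x`. -/
def outputs (M : Nat.Partrec.Code) (p d x : List Bool) : Prop :=
  strToNat x ∈ evalS M p d

/-- `M` halts on program `p` (with empty auxiliary input). -/
def haltsOn (M : Nat.Partrec.Code) (p : List Bool) : Prop :=
  (evalS M p []).Dom

/-- The number of computation steps taken by `M` on program `p` (with empty auxiliary
input); meaningful only when `M` halts on `p`. -/
noncomputable def halttime (M : Nat.Partrec.Code) (p : List Bool) : ℕ :=
  sInf {t | (Nat.Partrec.Code.evaln t M (Nat.pair (strToNat p) 0)).isSome}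

/-- `M` is a universal machine: it simulates every machine `V` via a prefix `w_V`. -/
def Universal (M : Nat.Partrec.Code) : Prop :=
  ∀ V : Nat.Partrec.Code, ∃ w : List Bool, ∀ p y : List Bool,
    (evalS V p y).Dom → evalS M (w ++ p) y = evalS V p y

/-- Plain Kolmogorov complexity `C(x)` on machine `M`. -/
noncomputable def Cpx (M : Nat.Partrec.Code) (x : List Bool) : ℕ :=
  sInf {n | ∃ p : List Bool, p.length = n ∧ outputs M p [] x}

/-- Sophistication of `x` at (integer) significance level `c`. -/
noncomputable def soph (M : Nat.Partrec.Code) (c : ℤ) (x : List Bool) : ℕ :=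
  sInf {n | ∃ p : List Bool, p.length = n ∧ (∀ d : List Bool, (evalS M p d).Dom) ∧
    ∃ d : List Bool, outputs M p d x ∧ (p.length + d.length : ℤ) ≤ (Cpx M x : ℤ) + c}

/-- Logical depth of `x` at significance level `c`. -/
noncomputable def ld (M : Nat.Partrec.Code) (c : ℕ) (x : List Bool) : ℕ :=
  sInf {t | ∃ p : List Bool, p.length ≤ Cpx M x + c ∧ outputs M p [] x ∧ halttime M p = t}

/-- The inverse Busy Beaver function `bb(n)`. -/
noncomputable def bbInv (M : Nat.Partrec.Code) (n : ℕ) : ℕ :=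
  sInf {k | ∃ p : List Bool, p.length = k ∧ haltsOn M p ∧ n ≤ halttime M p}

/-- Busy Beaver logical depth of `x` at significance `c`. -/
noncomputable def ldbb (M : Nat.Partrec.Code) (c : ℕ) (x : List Bool) : ℕ :=
  bbInv M (ld M c x)

/-- The Busy Beaver function `BB(l)`. -/
noncomputable def BB (M : Nat.Partrec.Code) (l : ℕ) : ℕ :=
  sSup {t | ∃ p : List Bool, p.length ≤ l ∧ haltsOn M p ∧ halttime M p = t}

/-- Canonical encoding of a finite set of binary strings: the code of the sorted list
of the codes of its elements. -/
def setCode (S : Finset (List Bool)) : ℕ :=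
  Encodable.encode ((S.image strToNat).sort (· ≤ ·))

/-- Kolmogorov complexity `C(S)` of a finite set of binary strings on machine `M`. -/
noncomputable def CSet (M : Nat.Partrec.Code) (S : Finset (List Bool)) : ℕ :=
  sInf {n | ∃ p : List Bool, p.length = n ∧ setCode S ∈ evalS M p []}

/-- Conditional Kolmogorov complexity `C(x | m)` where the condition is a natural number. -/
noncomputable def CpxCondN (M : Nat.Partrec.Code) (x : List Bool) (m : ℕ) : ℕ :=
  sInf {n | ∃ p : List Bool, p.length = n ∧ strToNat x ∈ M.eval (Nat.pair (strToNat p) m)}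

namespace TwoPart

def len (a : ℕ) : ℕ := Nat.log 2 (a + 1)

lemma strToNat_append (a b : List Bool) :
    strToNat (a ++ b) = strToNat a + 2 ^ a.length * strToNat b := by
  induction a with
  | nil => simp [strToNat]
  | cons h t ih => simp [strToNat, ih, pow_succ]; ring

lemma strToNat_bounds (s : List Bool) :
    2 ^ s.length ≤ strToNat s + 1 ∧ strToNat s + 1 < 2 ^ (s.length + 1) := by
  induction s with
  | nil => simp [strToNat]
  | cons b t ih =>
    rcases ih with ⟨h1, h2⟩
    cases b <;> simp [strToNat, pow_succ] <;> omega

lemma len_strToNat (s : List Bool) : len (strToNat s) = s.length :=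
  Nat.log_eq_of_pow_le_of_lt_pow (strToNat_bounds s).1 (strToNat_bounds s).2

lemma filter_len (c n : ℕ) :
    ((List.range n).filterMap (fun L => if L < c then some L else none)).length = min c n := by
  induction n with
  | zero => simp
  | succ n ih =>
    rw [List.range_succ, List.filterMap_append, List.length_append, ih]
    by_cases h : n < c <;> simp [h] <;> omega

lemma len_eq (a : ℕ) :
    len a = ((List.range (a+1)).filterMap
      (fun L => if 2 ^ (L+1) ≤ a + 1 then some L else none)).length := by
  have hpred : ∀ L : ℕ, (2 ^ (L+1) ≤ a + 1) ↔ L < len a := by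
    intro L
    rw [← Nat.le_log_iff_pow_le (by norm_num) (by omega)]
    exact ⟨fun h => h, fun h => h⟩
  have : (fun L => if 2 ^ (L+1) ≤ a + 1 then some L else none)
      = (fun L => if L < len a then some L else none) := by
    funext L; by_cases h : 2 ^ (L+1) ≤ a + 1
    · rw [if_pos h, if_pos ((hpred L).mp h)]
    · rw [if_neg h, if_neg (fun hc => h ((hpred L).mpr hc))]
  rw [this, filter_len]
  have : len a ≤ a + 1 := le_trans (Nat.log_le_self _ _) (by omega)
  omega

lemma primrec_len : Primrec len := by
  have hpow : Primrec₂ (fun a b : ℕ => a ^ b) := Primrec₂.unpaired'.mp Nat.Primrec.pow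
  have hpred : PrimrecPred (fun q : ℕ × ℕ => 2 ^ (q.2 + 1) ≤ q.1 + 1) :=
    Primrec.nat_le.comp (hpow.comp (Primrec.const 2) (Primrec.succ.comp Primrec.snd))
      (Primrec.succ.comp Primrec.fst)
  have hg : Primrec₂ (fun (a L : ℕ) => if 2 ^ (L+1) ≤ a + 1 then some L else none) :=
    Primrec.ite hpred (Primrec.option_some.comp Primrec.snd) (Primrec.const none)
  have := Primrec.list_length.comp
    (Primrec.listFilterMap (Primrec.list_range.comp Primrec.succ) hg)
  exact this.of_eq fun a => (len_eq a).symm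

def fN (n : ℕ) : ℕ :=
  n.unpair.1 + 2 ^ len n.unpair.1 * (n.unpair.2 + 2 ^ len n.unpair.2 * len n.unpair.1)

lemma primrec_fN : Primrec fN := by
  have hpow : Primrec₂ (fun a b : ℕ => a ^ b) := Primrec₂.unpaired'.mp Nat.Primrec.pow
  have h1 : Primrec (fun n : ℕ => n.unpair.1) := Primrec.fst.comp Primrec.unpair
  have h2 : Primrec (fun n : ℕ => n.unpair.2) := Primrec.snd.comp Primrec.unpair
  have hl1 : Primrec (fun n : ℕ => len n.unpair.1) := primrec_len.comp h1
  have hl2 : Primrec (fun n : ℕ => len n.unpair.2) := primrec_len.comp h2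
  exact Primrec.nat_add.comp h1 (Primrec.nat_mul.comp
    (hpow.comp (Primrec.const 2) hl1)
    (Primrec.nat_add.comp h2 (Primrec.nat_mul.comp (hpow.comp (Primrec.const 2) hl2) hl1)))

lemma exists_codeV : ∃ c : Nat.Partrec.Code, c.eval = fun n => Part.some (fN n) :=
  Nat.Partrec.Code.exists_code.mp (Partrec.nat_iff.mp primrec_fN.to_comp)

end TwoPart

open TwoPart

theorem twopart_shorter :
    ∀ U : Nat.Partrec.Code, Universal U →
    ∃ c' : ℕ, ∀ k : ℕ, 1 ≤ k → ∀ x : List Bool, k + Nat.log 2 k ≤ x.length →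
      soph U ((x.length : ℤ) - Cpx U x - Nat.log 2 k + c') x ≤ k + c' := by
  intro U hU
  obtain ⟨V, hV⟩ := exists_codeV
  obtain ⟨w, hw⟩ := hU V
  refine ⟨w.length + 1, fun k hk x hx => ?_⟩
  set L := Nat.log 2 k - 1 with hLdef
  set m := x.length - L with hmdef
  set e := x.drop m with hedef
  set j := strToNat e with hjdef
  set p := x.take j with hpdef
  set d := (x.drop j).take (m - j) with hddef
  have hLk : L ≤ Nat.log 2 k := Nat.sub_le _ _
  have hLx : L ≤ x.length := by omega
  have hmx : m ≤ x.length := Nat.sub_le _ _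
  have he_len : e.length = L := by
    rw [hedef, List.length_drop]; omega
  have hj_le_k : j ≤ k := by
    have hb := (strToNat_bounds e).2
    rw [he_len] at hb
    by_cases hk2 : Nat.log 2 k = 0
    · have hL0 : L = 0 := by omega
      rw [hL0] at hb; norm_num at hb; omega
    · have hLeq : L + 1 = Nat.log 2 k := by omega
      have h2 : 2 ^ Nat.log 2 k ≤ k := Nat.pow_log_le_self 2 (by omega)
      rw [hLeq] at hb; omega
  have hjm : j ≤ m := by omega
  have hjx : j ≤ x.length := by omega
  have hp_len : p.length = j := by
    rw [hpdef, List.length_take]; omega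
  have hd_len : d.length = m - j := by
    rw [hddef, List.length_take, List.length_drop]; omega
  have hde : d ++ e = x.drop j := by
    have h1 : e = (x.drop j).drop (m - j) := by
      rw [hedef, List.drop_drop]; congr 1; omega
    rw [h1, hddef]; exact List.take_append_drop _ _
  have hsplit : p ++ (d ++ e) = x := by
    rw [hde, hpdef]; exact List.take_append_drop _ _
  have hval : fN (Nat.pair (strToNat p) (strToNat d)) = strToNat x := by
    have h1 : strToNat x = strToNat p + 2 ^ p.length * (strToNat d + 2 ^ d.length * strToNat e) := by
      rw [← hsplit, strToNat_append, strToNat_append]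
    have h2 : fN (Nat.pair (strToNat p) (strToNat d))
        = strToNat p + 2 ^ p.length * (strToNat d + 2 ^ d.length * len (strToNat p)) := by
      simp [fN, Nat.unpair_pair, len_strToNat]
    rw [h1, h2, len_strToNat, hp_len, hjdef]
  have hVeval : ∀ q y : List Bool,
      evalS V q y = Part.some (fN (Nat.pair (strToNat q) (strToNat y))) := by
    intro q y; rw [evalS, hV]
  have hUq : ∀ y : List Bool, evalS U (w ++ p) y = evalS V p y := by
    intro y
    exact hw p y (by rw [hVeval]; trivial)
  have hmem : (w ++ p).length ∈ {n | ∃ q : List Bool, q.length = n ∧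
      (∀ d : List Bool, (evalS U q d).Dom) ∧
      ∃ d : List Bool, outputs U q d x ∧
        (q.length + d.length : ℤ) ≤ (Cpx U x : ℤ) +
          ((x.length : ℤ) - Cpx U x - Nat.log 2 k + (w.length + 1 : ℕ))} := by
    refine ⟨w ++ p, rfl, fun y => ?_, d, ?_, ?_⟩
    · rw [hUq y, hVeval]; trivial
    · rw [outputs, hUq d, hVeval, hval]; exact Part.mem_some _
    · simp only [List.length_append, hp_len, hd_len]
      push_cast
      omega
  calc soph U ((x.length : ℤ) - Cpx U x - Nat.log 2 k + (w.length + 1 : ℕ)) x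
      ≤ (w ++ p).length := Nat.sInf_le hmem
    _ ≤ k + (w.length + 1) := by
        simp only [List.length_append, hp_len]; omega
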